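/- Let G be a two-player finite strategic-form game and G' the auxiliary four-player game defined as follows: players 1 and 2 of G' have pure strategy set S₁, players 3 and 4 have pure strategy set S₂, and utilities u'₁(s₁,s₂,s₃,s₄) = −ε₂u₂(s₁,s₃) − (1−ε₂)u₂(s₁,s₄), u'₂ = ε₂u₁(s₂,s₃) + (1−ε₂)u₁(s₂,s₄), u'₃ = −ε₁u₁(s₁,s₃) − (1−ε₁)u₁(s₂,s₃), u'₄ = ε₁u₂(s₁,s₄) + (1−ε₁)u₂(s₂,s₄). Then every Nash equilibrium (τ₁, ρ₁, τ₂, ρ₂) of G' yields an ε-safe equilibrium of G via σᵢ = εᵢτᵢ + (1−εᵢ)ρᵢ. -/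
import Mathlib


open Finset

/-- Expected utility in a two-player strategic-form game, extended bilinearly. -/
def EU {S1 S2 : Type*} [Fintype S1] [Fintype S2] (u : S1 → S2 → ℝ)
    (σ1 : S1 → ℝ) (σ2 : S2 → ℝ) : ℝ :=
  ∑ a : S1, ∑ b : S2, σ1 a * σ2 b * u a b

/-- `(σ1, σ2)` is an `(ε1, ε2)`-safe equilibrium of the two-player game `(u1, u2)`. -/
def IsSafeEq {S1 S2 : Type*} [Fintype S1] [Fintype S2]
    (u1 u2 : S1 → S2 → ℝ) (ε1 ε2 : ℝ) (σ1 : S1 → ℝ) (σ2 : S2 → ℝ) : Prop :=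
  ∃ τ1 ρ1 : S1 → ℝ, ∃ τ2 ρ2 : S2 → ℝ,
    τ1 ∈ stdSimplex ℝ S1 ∧ ρ1 ∈ stdSimplex ℝ S1 ∧
    τ2 ∈ stdSimplex ℝ S2 ∧ ρ2 ∈ stdSimplex ℝ S2 ∧
    σ1 = (fun s => ε1 * τ1 s + (1 - ε1) * ρ1 s) ∧
    σ2 = (fun s => ε2 * τ2 s + (1 - ε2) * ρ2 s) ∧
    (∀ σ ∈ stdSimplex ℝ S1, EU u1 σ σ2 ≤ EU u1 ρ1 σ2) ∧
    (∀ σ ∈ stdSimplex ℝ S1, EU u2 τ1 σ2 ≤ EU u2 σ σ2) ∧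
    (∀ σ ∈ stdSimplex ℝ S2, EU u2 σ1 σ ≤ EU u2 σ1 ρ2) ∧
    (∀ σ ∈ stdSimplex ℝ S2, EU u1 σ1 τ2 ≤ EU u1 σ1 σ)

/-- `(σ1, σ2)` is a Nash equilibrium of the two-player game `(u1, u2)`. -/
def IsNash {S1 S2 : Type*} [Fintype S1] [Fintype S2]
    (u1 u2 : S1 → S2 → ℝ) (σ1 : S1 → ℝ) (σ2 : S2 → ℝ) : Prop :=
  σ1 ∈ stdSimplex ℝ S1 ∧ σ2 ∈ stdSimplex ℝ S2 ∧
  (∀ σ ∈ stdSimplex ℝ S1, EU u1 σ σ2 ≤ EU u1 σ1 σ2) ∧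
  (∀ σ ∈ stdSimplex ℝ S2, EU u2 σ1 σ ≤ EU u2 σ1 σ2)

/-- Expected utility in a four-player strategic-form game. -/
def EU4 {A B C D : Type*} [Fintype A] [Fintype B] [Fintype C] [Fintype D]
    (u : A → B → C → D → ℝ) (pa : A → ℝ) (pb : B → ℝ) (pc : C → ℝ) (pd : D → ℝ) : ℝ :=
  ∑ a : A, ∑ b : B, ∑ c : C, ∑ d : D, pa a * pb b * pc c * pd d * u a b c d

lemma fact_ac {A B C D : Type*} [Fintype A] [Fintype B] [Fintype C] [Fintype D]
    (pa : A → ℝ) (pb : B → ℝ) (pc : C → ℝ) (pd : D → ℝ) (f : A → C → ℝ) :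
    ∑ a : A, ∑ b : B, ∑ c : C, ∑ d : D, pa a * pb b * pc c * pd d * f a c
      = (∑ b, pb b) * ((∑ d, pd d) * ∑ a, ∑ c, pa a * pc c * f a c) := by
  simp only [Finset.sum_mul, Finset.mul_sum]
  refine Finset.sum_congr rfl fun a _ => ?_
  conv_lhs => rw [Finset.sum_comm]
  refine Finset.sum_congr rfl fun c _ => ?_
  conv_lhs => rw [Finset.sum_comm]
  exact Finset.sum_congr rfl fun d _ => Finset.sum_congr rfl fun b _ => by ring

lemma fact_ad {A B C D : Type*} [Fintype A] [Fintype B] [Fintype C] [Fintype D]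
    (pa : A → ℝ) (pb : B → ℝ) (pc : C → ℝ) (pd : D → ℝ) (f : A → D → ℝ) :
    ∑ a : A, ∑ b : B, ∑ c : C, ∑ d : D, pa a * pb b * pc c * pd d * f a d
      = (∑ b, pb b) * ((∑ c, pc c) * ∑ a, ∑ d, pa a * pd d * f a d) := by
  simp only [Finset.sum_mul, Finset.mul_sum]
  refine Finset.sum_congr rfl fun a _ => ?_
  conv_lhs => rw [Finset.sum_comm]
  conv_lhs => enter [2, c]; rw [Finset.sum_comm]
  conv_lhs => rw [Finset.sum_comm]
  refine Finset.sum_congr rfl fun d _ => ?_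
  refine Finset.sum_congr rfl fun c _ => ?_
  exact Finset.sum_congr rfl fun b _ => by ring

lemma fact_bc {A B C D : Type*} [Fintype A] [Fintype B] [Fintype C] [Fintype D]
    (pa : A → ℝ) (pb : B → ℝ) (pc : C → ℝ) (pd : D → ℝ) (f : B → C → ℝ) :
    ∑ a : A, ∑ b : B, ∑ c : C, ∑ d : D, pa a * pb b * pc c * pd d * f b c
      = (∑ a, pa a) * ((∑ d, pd d) * ∑ b, ∑ c, pb b * pc c * f b c) := by
  simp only [Finset.sum_mul, Finset.mul_sum]
  conv_lhs => rw [Finset.sum_comm]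
  refine Finset.sum_congr rfl fun b _ => ?_
  conv_lhs => rw [Finset.sum_comm]
  refine Finset.sum_congr rfl fun c _ => ?_
  conv_lhs => rw [Finset.sum_comm]
  refine Finset.sum_congr rfl fun d _ => ?_
  exact Finset.sum_congr rfl fun a _ => by ring

lemma fact_bd {A B C D : Type*} [Fintype A] [Fintype B] [Fintype C] [Fintype D]
    (pa : A → ℝ) (pb : B → ℝ) (pc : C → ℝ) (pd : D → ℝ) (f : B → D → ℝ) :
    ∑ a : A, ∑ b : B, ∑ c : C, ∑ d : D, pa a * pb b * pc c * pd d * f b d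
      = (∑ a, pa a) * ((∑ c, pc c) * ∑ b, ∑ d, pb b * pd d * f b d) := by
  simp only [Finset.sum_mul, Finset.mul_sum]
  conv_lhs => rw [Finset.sum_comm]
  refine Finset.sum_congr rfl fun b _ => ?_
  conv_lhs => rw [Finset.sum_comm]
  conv_lhs => enter [2, c]; rw [Finset.sum_comm]
  conv_lhs => rw [Finset.sum_comm]
  refine Finset.sum_congr rfl fun d _ => ?_
  refine Finset.sum_congr rfl fun c _ => ?_
  exact Finset.sum_congr rfl fun a _ => by ring

lemma EU_k {A C : Type*} [Fintype A] [Fintype C] (k : ℝ) (u : A → C → ℝ)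
    (p : A → ℝ) (q : C → ℝ) :
    ∑ a : A, ∑ c : C, p a * q c * (k * u a c) = k * EU u p q := by
  simp only [EU, Finset.mul_sum, ← Finset.sum_add_distrib]
  exact Finset.sum_congr rfl fun a _ => Finset.sum_congr rfl fun c _ => by ring

lemma EU_negk {A C : Type*} [Fintype A] [Fintype C] (k : ℝ) (u : A → C → ℝ)
    (p : A → ℝ) (q : C → ℝ) :
    ∑ a : A, ∑ c : C, p a * q c * -(k * u a c) = -(k * EU u p q) := by
  rw [← EU_k k u p q, ← Finset.sum_neg_distrib]
  exact Finset.sum_congr rfl fun a _ => by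
    rw [← Finset.sum_neg_distrib]
    exact Finset.sum_congr rfl fun c _ => by ring

lemma EU_mix_right {A C : Type*} [Fintype A] [Fintype C] (u : A → C → ℝ)
    (p : A → ℝ) (x y : ℝ) (τ ρ : C → ℝ) :
    EU u p (fun s => x * τ s + y * ρ s) = x * EU u p τ + y * EU u p ρ := by
  simp only [EU, Finset.mul_sum, ← Finset.sum_add_distrib]
  exact Finset.sum_congr rfl fun a _ => Finset.sum_congr rfl fun c _ => by ring

lemma EU_mix_left {A C : Type*} [Fintype A] [Fintype C] (u : A → C → ℝ)
    (q : C → ℝ) (x y : ℝ) (τ ρ : A → ℝ) :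
    EU u (fun s => x * τ s + y * ρ s) q = x * EU u τ q + y * EU u ρ q := by
  simp only [EU, Finset.mul_sum, ← Finset.sum_add_distrib]
  exact Finset.sum_congr rfl fun a _ => Finset.sum_congr rfl fun c _ => by ring

/-- every Nash equilibrium (τ₁, ρ₁, τ₂, ρ₂) of the auxiliary
four-player game G' yields an ε-safe equilibrium of G via σᵢ = εᵢτᵢ + (1−εᵢ)ρᵢ. -/
theorem aux_game_nash_gives_safeEq
    {S1 S2 : Type*} [Fintype S1] [Fintype S2]
    (u1 u2 : S1 → S2 → ℝ) (ε1 ε2 : ℝ)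
    (hε1 : ε1 ∈ Set.Icc (0:ℝ) 1) (hε2 : ε2 ∈ Set.Icc (0:ℝ) 1)
    (u'1 u'2 : S1 → S1 → S2 → S2 → ℝ) (u'3 u'4 : S1 → S1 → S2 → S2 → ℝ)
    (hu1 : u'1 = fun s1 _s2 s3 s4 => -(ε2 * u2 s1 s3) - (1 - ε2) * u2 s1 s4)
    (hu2 : u'2 = fun _s1 s2 s3 s4 => ε2 * u1 s2 s3 + (1 - ε2) * u1 s2 s4)
    (hu3 : u'3 = fun s1 s2 s3 _s4 => -(ε1 * u1 s1 s3) - (1 - ε1) * u1 s2 s3)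
    (hu4 : u'4 = fun s1 s2 _s3 s4 => ε1 * u2 s1 s4 + (1 - ε1) * u2 s2 s4)
    (τ1 ρ1 : S1 → ℝ) (τ2 ρ2 : S2 → ℝ)
    (hτ1 : τ1 ∈ stdSimplex ℝ S1) (hρ1 : ρ1 ∈ stdSimplex ℝ S1)
    (hτ2 : τ2 ∈ stdSimplex ℝ S2) (hρ2 : ρ2 ∈ stdSimplex ℝ S2)
    -- Nash equilibrium conditions in G'
    (hN1 : ∀ p ∈ stdSimplex ℝ S1, EU4 u'1 p ρ1 τ2 ρ2 ≤ EU4 u'1 τ1 ρ1 τ2 ρ2)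
    (hN2 : ∀ p ∈ stdSimplex ℝ S1, EU4 u'2 τ1 p τ2 ρ2 ≤ EU4 u'2 τ1 ρ1 τ2 ρ2)
    (hN3 : ∀ p ∈ stdSimplex ℝ S2, EU4 u'3 τ1 ρ1 p ρ2 ≤ EU4 u'3 τ1 ρ1 τ2 ρ2)
    (hN4 : ∀ p ∈ stdSimplex ℝ S2, EU4 u'4 τ1 ρ1 τ2 p ≤ EU4 u'4 τ1 ρ1 τ2 ρ2) :
    IsSafeEq u1 u2 ε1 ε2
      (fun s => ε1 * τ1 s + (1 - ε1) * ρ1 s)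
      (fun s => ε2 * τ2 s + (1 - ε2) * ρ2 s) := by
  have sτ1 := hτ1.2
  have sρ1 := hρ1.2
  have sτ2 := hτ2.2
  have sρ2 := hρ2.2
  have key1 : ∀ p : S1 → ℝ, EU4 u'1 p ρ1 τ2 ρ2
      = -(ε2 * EU u2 p τ2) - (1 - ε2) * EU u2 p ρ2 := by
    intro p
    simp only [EU4, hu1, mul_sub, Finset.sum_sub_distrib]
    rw [fact_ac p ρ1 τ2 ρ2 (fun a c => -(ε2 * u2 a c)),
        fact_ad p ρ1 τ2 ρ2 (fun a d => (1 - ε2) * u2 a d),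
        sρ1, sτ2, sρ2, EU_negk, EU_k]
    ring
  have key2 : ∀ p : S1 → ℝ, EU4 u'2 τ1 p τ2 ρ2
      = ε2 * EU u1 p τ2 + (1 - ε2) * EU u1 p ρ2 := by
    intro p
    simp only [EU4, hu2, mul_add, Finset.sum_add_distrib]
    rw [fact_bc τ1 p τ2 ρ2 (fun b c => ε2 * u1 b c),
        fact_bd τ1 p τ2 ρ2 (fun b d => (1 - ε2) * u1 b d),
        sτ1, sτ2, sρ2, EU_k, EU_k]
    ring
  have key3 : ∀ p : S2 → ℝ, EU4 u'3 τ1 ρ1 p ρ2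
      = -(ε1 * EU u1 τ1 p) - (1 - ε1) * EU u1 ρ1 p := by
    intro p
    simp only [EU4, hu3, mul_sub, Finset.sum_sub_distrib]
    rw [fact_ac τ1 ρ1 p ρ2 (fun a c => -(ε1 * u1 a c)),
        fact_bc τ1 ρ1 p ρ2 (fun b c => (1 - ε1) * u1 b c),
        sτ1, sρ1, sρ2, EU_negk, EU_k]
    ring
  have key4 : ∀ p : S2 → ℝ, EU4 u'4 τ1 ρ1 τ2 p
      = ε1 * EU u2 τ1 p + (1 - ε1) * EU u2 ρ1 p := by
    intro p
    simp only [EU4, hu4, mul_add, Finset.sum_add_distrib]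
    rw [fact_ad τ1 ρ1 τ2 p (fun a d => ε1 * u2 a d),
        fact_bd τ1 ρ1 τ2 p (fun b d => (1 - ε1) * u2 b d),
        sτ1, sρ1, sτ2, EU_k, EU_k]
    ring
  refine ⟨τ1, ρ1, τ2, ρ2, hτ1, hρ1, hτ2, hρ2, rfl, rfl, ?_, ?_, ?_, ?_⟩
  · intro σ hσ
    have h := hN2 σ hσ
    rw [key2 σ, key2 ρ1] at h
    rw [EU_mix_right, EU_mix_right]
    linarith
  · intro σ hσ
    have h := hN1 σ hσ
    rw [key1 σ, key1 τ1] at h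
    rw [EU_mix_right, EU_mix_right]
    linarith
  · intro σ hσ
    have h := hN4 σ hσ
    rw [key4 σ, key4 ρ2] at h
    rw [EU_mix_left, EU_mix_left]
    linarith
  · intro σ hσ
    have h := hN3 σ hσ
    rw [key3 σ, key3 τ2] at h
    rw [EU_mix_left, EU_mix_left]
    linarith
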